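/- If G is a 2-sparse graph, then G is chordless. -/

import Mathlib

open SimpleGraph

noncomputable def edeg {V : Type*} (G : SimpleGraph V) (v : V) : ℕ :=
  {u | G.Adj v u}.ncard

def IsProperEdgeColoring {V : Type*} (G : SimpleGraph V) (c : Sym2 V → ℕ) : Prop :=
  ∀ e₁ ∈ G.edgeSet, ∀ e₂ ∈ G.edgeSet, e₁ ≠ e₂ → (∃ v, v ∈ e₁ ∧ v ∈ e₂) → c e₁ ≠ c e₂

def IsAcyclicEdgeColoring {V : Type*} (G : SimpleGraph V) (c : Sym2 V → ℕ) : Prop :=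
  IsProperEdgeColoring G c ∧
  ∀ (v : V) (w : G.Walk v v), w.IsCycle →
    ¬ ∃ α β : ℕ, ∀ e ∈ w.edges, c e = α ∨ c e = β

noncomputable def acyclicChromaticIndex {V : Type*} (G : SimpleGraph V) : ℕ :=
  sInf {n | ∃ c : Sym2 V → ℕ, IsAcyclicEdgeColoring G c ∧ ∀ e ∈ G.edgeSet, c e < n}

def Chordless {V : Type*} (G : SimpleGraph V) : Prop :=
  ∀ u v : V, G.Adj u v →
    ¬ ∃ (x : V) (w : (G.deleteEdges {s(u, v)}).Walk x x),
        w.IsCycle ∧ u ∈ w.support ∧ v ∈ w.support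

def TwoSparse {V : Type*} (G : SimpleGraph V) : Prop :=
  ∀ u v, G.Adj u v → edeg G u ≤ 2 ∨ edeg G v ≤ 2

lemma cycle_two_neighbors {V : Type*} {H : SimpleGraph V} {x y : V} (w : H.Walk y y)
    (hw : w.IsCycle) (hx : x ∈ w.support) :
    ∃ a b : V, a ≠ b ∧ H.Adj x a ∧ H.Adj x b := by
  classical
  have hc := hw.rotate hx
  set c := w.rotate x hx with hcdef
  cases hcc : c with
  | nil => rw [hcc] at hc; exact absurd rfl hc.ne_nil
  | cons ha p =>
    rename_i a
    cases hpp : p.reverse with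
    | nil => exact absurd rfl ha.ne
    | cons hb q =>
      rename_i b
      refine ⟨a, b, ?_, ha, hb⟩
      intro hab
      subst hab
      have hnodup : (SimpleGraph.Walk.cons ha p).edges.Nodup := by
        rw [← hcc]; exact hc.edges_nodup
      rw [SimpleGraph.Walk.edges_cons] at hnodup
      have hmem : s(x, a) ∈ p.edges := by
        have : s(x, a) ∈ p.reverse.edges := by
          rw [hpp, SimpleGraph.Walk.edges_cons]; exact List.mem_cons_self
        rwa [SimpleGraph.Walk.edges_reverse, List.mem_reverse] at this
      exact (List.nodup_cons.mp hnodup).1 hmem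

theorem stmt4 {V : Type*} [Fintype V] (G : SimpleGraph V) (h : TwoSparse G) :
    Chordless G := by
  classical
  intro u v huv ⟨x, w, hw, hu, hv⟩
  have key : ∀ z z' : V, G.Adj z z' → s(z, z') = s(u, v) → z ∈ w.support →
      3 ≤ edeg G z := by
    intro z z' hzz' hedge hz
    obtain ⟨a, b, hab, ha, hb⟩ := cycle_two_neighbors w hw hz
    rw [SimpleGraph.deleteEdges_adj] at ha hb
    have haz' : a ≠ z' := by
      rintro rfl
      exact ha.2 (by rw [hedge]; rfl)
    have hbz' : b ≠ z' := by
      rintro rfl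
      exact hb.2 (by rw [hedge]; rfl)
    have hsub : ({z', a, b} : Set V) ⊆ {t | G.Adj z t} := by
      intro t ht
      rcases ht with rfl | rfl | rfl
      · exact hzz'
      · exact ha.1
      · exact hb.1
    have hcard : ({z', a, b} : Set V).ncard = 3 := by
      rw [Set.ncard_insert_of_notMem
          (by simp only [Set.mem_insert_iff, Set.mem_singleton_iff]; tauto) (Set.toFinite _),
        Set.ncard_insert_of_notMem (by simp [hab]) (Set.toFinite _), Set.ncard_singleton]
    calc 3 = ({z', a, b} : Set V).ncard := hcard.symm
      _ ≤ _ := Set.ncard_le_ncard hsub (Set.toFinite _)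
  have h1 : 3 ≤ edeg G u := key u v huv rfl hu
  have h2 : 3 ≤ edeg G v := key v u huv.symm (Sym2.eq_swap) hv
  rcases h u v huv with h' | h' <;> omega
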